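/- Suppose in the quadratic program min (1/2)X̂ᵀX̂ − q̂ᵀX̂ subject to ÂᵀX̂ = b̂, the demand compatibility holds: q̂ = D̂Y for some Y and Â = ĈA_c for some A_c. Then Îq̂ = q̂ and ÎÂ = Â, where Î = ÛD̂(ÛD̂)⁺ + ĈĈ⁺, and consequently the variational-subspace reduced solution equals the exact solution. -/

import Mathlib

open Matrix

lemma aux_inj_of_rank {n' k' : Type*} [Fintype n'] [Fintype k'] (B : Matrix n' k' ℝ)
    (h : B.rank = Fintype.card k') : Function.Injective B.mulVecLin := by
  rw [← LinearMap.ker_eq_bot]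
  have h1 := LinearMap.finrank_range_add_finrank_ker B.mulVecLin
  rw [Module.finrank_fintype_fun_eq_card] at h1
  have : Module.finrank ℝ (LinearMap.ker B.mulVecLin) = 0 := by
    have h2 : Matrix.rank B = Module.finrank ℝ (LinearMap.range B.mulVecLin) := rfl
    omega
  exact Submodule.finrank_eq_zero.mp this

lemma aux_rank_of_inj {n' k' : Type*} [Fintype n'] [Fintype k'] (B : Matrix n' k' ℝ)
    (h : Function.Injective B.mulVecLin) : B.rank = Fintype.card k' := by
  rw [Matrix.rank, LinearMap.finrank_range_of_inj h, Module.finrank_fintype_fun_eq_card]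

lemma aux_isUnit_of_rank {r' : Type*} [Fintype r'] [DecidableEq r'] (M : Matrix r' r' ℝ)
    (h : M.rank = Fintype.card r') : IsUnit M := by
  rw [Matrix.isUnit_iff_isUnit_det, isUnit_iff_ne_zero]
  intro hd
  obtain ⟨v, hvne, hMv⟩ := (Matrix.exists_mulVec_eq_zero_iff.mpr hd)
  have hi := aux_inj_of_rank M h
  apply hvne
  apply hi
  simp [Matrix.mulVecLin_apply, hMv]

lemma aux_isUnit_gram {n' k' : Type*} [Fintype n'] [Fintype k'] [DecidableEq k']
    (B : Matrix n' k' ℝ) (h : Function.Injective B.mulVecLin) : IsUnit (Bᵀ * B) := by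
  apply aux_isUnit_of_rank
  rw [Matrix.rank_transpose_mul_self, aux_rank_of_inj B h]

/-- Demand compatibility. If `q̂ = D̂Y` and `Â = ĈA_c`, then
`Îq̂ = q̂` and `ÎÂ = Â`, and the variational-subspace reduced solution equals
the exact solution. -/
theorem demand_compatibility_exactness
    (n d k m : ℕ) (C : Matrix (Fin n) (Fin d) ℝ) (D : Matrix (Fin n) (Fin k) ℝ)
    (A : Matrix (Fin n) (Fin m) ℝ)
    (q : Fin n → ℝ) (b : Fin m → ℝ)
    (hrank : (Matrix.fromCols C D).rank = d + k)
    (hArank : A.rank = m)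
    (Y : Fin k → ℝ) (Ac : Matrix (Fin d) (Fin m) ℝ)
    (hq : q = D *ᵥ Y) (hA : A = C * Ac) :
    let Cp : Matrix (Fin d) (Fin n) ℝ := (Cᵀ * C)⁻¹ * Cᵀ
    let U : Matrix (Fin n) (Fin n) ℝ := 1 - C * Cp
    let UDp : Matrix (Fin k) (Fin n) ℝ := (Dᵀ * U * D)⁻¹ * Dᵀ * Uᵀ
    let Ihat : Matrix (Fin n) (Fin n) ℝ := U * D * UDp + C * Cp
    let Ap : Matrix (Fin m) (Fin n) ℝ := (Aᵀ * A)⁻¹ * Aᵀ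
    let App : Matrix (Fin n) (Fin m) ℝ := Ihat * A
    let Appp : Matrix (Fin m) (Fin n) ℝ := (Appᵀ * App)⁻¹ * Appᵀ
    IsUnit (Aᵀ * Ihat * A) →
      Ihat *ᵥ q = q ∧ Ihat * A = A ∧
        (Ihat - App * Appp) *ᵥ q + Apppᵀ *ᵥ b
          = (1 - A * Ap) *ᵥ q + Apᵀ *ᵥ b := by
  intro Cp U UDp Ihat Ap App Appp hUnit
  -- injectivity of the block matrix
  have injFC : Function.Injective (Matrix.fromCols C D).mulVecLin := by
    apply aux_inj_of_rank
    simpa using hrank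
  have hinj : ∀ (x : Fin d → ℝ) (y : Fin k → ℝ), C *ᵥ x + D *ᵥ y = 0 → x = 0 ∧ y = 0 := by
    intro x y h0
    have h1 : (Matrix.fromCols C D).mulVecLin (Sum.elim x y)
        = (Matrix.fromCols C D).mulVecLin 0 := by
      simp [Matrix.mulVecLin_apply, h0]
    have h2 := injFC h1
    constructor
    · funext i; exact congrFun h2 (Sum.inl i)
    · funext j; exact congrFun h2 (Sum.inr j)
  -- C has full column rank
  have injC : Function.Injective C.mulVecLin := by
    rw [← LinearMap.ker_eq_bot, LinearMap.ker_eq_bot']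
    intro x hx
    exact (hinj x 0 (by simpa [Matrix.mulVecLin_apply] using hx)).1
  have hSC : IsUnit (Cᵀ * C) := aux_isUnit_gram C injC
  have hdetC : IsUnit (Cᵀ * C).det := (Matrix.isUnit_iff_isUnit_det _).mp hSC
  have hCpC : Cp * C = 1 := by
    show ((Cᵀ * C)⁻¹ * Cᵀ) * C = 1
    rw [Matrix.mul_assoc, Matrix.nonsing_inv_mul _ hdetC]
  have hUC : U * C = 0 := by
    show (1 - C * Cp) * C = 0
    rw [Matrix.sub_mul, Matrix.one_mul, Matrix.mul_assoc, hCpC, Matrix.mul_one, sub_self]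
  have hCpT : Cpᵀ = C * (Cᵀ * C)⁻¹ := by
    show ((Cᵀ * C)⁻¹ * Cᵀ)ᵀ = _
    rw [Matrix.transpose_mul, Matrix.transpose_transpose, Matrix.transpose_nonsing_inv,
      Matrix.transpose_mul, Matrix.transpose_transpose]
  have hUT : Uᵀ = U := by
    show (1 - C * Cp)ᵀ = 1 - C * Cp
    rw [Matrix.transpose_sub, Matrix.transpose_one, Matrix.transpose_mul, hCpT,
      Matrix.mul_assoc]
  have hUU : U * U = U := by
    have h1 : U * U = U - (U * C) * Cp := by
      show U * (1 - C * Cp) = _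
      rw [Matrix.mul_sub, Matrix.mul_one, Matrix.mul_assoc]
    rw [h1, hUC, Matrix.zero_mul, sub_zero]
  -- U * D has full column rank
  have injUD : Function.Injective (U * D).mulVecLin := by
    rw [← LinearMap.ker_eq_bot, LinearMap.ker_eq_bot']
    intro y hy
    have hy' : (U * D) *ᵥ y = 0 := by simpa [Matrix.mulVecLin_apply] using hy
    have h0 : C *ᵥ (-(Cp *ᵥ (D *ᵥ y))) + D *ᵥ y = 0 := by
      have h2 : (1 - C * Cp) *ᵥ (D *ᵥ y) = 0 := by
        rw [Matrix.mulVec_mulVec]; exact hy'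
      rw [Matrix.sub_mulVec, Matrix.one_mulVec] at h2
      rw [Matrix.mulVec_neg]
      rw [Matrix.mulVec_mulVec] at h2 ⊢
      rw [sub_eq_zero] at h2
      rw [Matrix.mulVec_mulVec, ← h2, neg_add_cancel]
    exact (hinj _ y h0).2
  have hSUD : IsUnit ((U * D)ᵀ * (U * D)) := aux_isUnit_gram _ injUD
  have hgram : (U * D)ᵀ * (U * D) = Dᵀ * U * D := by
    rw [Matrix.transpose_mul, hUT, Matrix.mul_assoc, ← Matrix.mul_assoc U U D, hUU,
      ← Matrix.mul_assoc]
  have hS2 : IsUnit (Dᵀ * U * D) := hgram ▸ hSUD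
  have hdet2 : IsUnit (Dᵀ * U * D).det := (Matrix.isUnit_iff_isUnit_det _).mp hS2
  -- key identities
  have hUDpC : UDp * C = 0 := by
    show ((Dᵀ * U * D)⁻¹ * Dᵀ * Uᵀ) * C = 0
    rw [hUT, Matrix.mul_assoc, hUC, Matrix.mul_zero]
  have hIC : Ihat * C = C := by
    show (U * D * UDp + C * Cp) * C = C
    rw [Matrix.add_mul, Matrix.mul_assoc (U * D) UDp C, hUDpC, Matrix.mul_zero,
      Matrix.mul_assoc, hCpC, Matrix.mul_one, zero_add]
  have hIA : Ihat * A = A := by rw [hA, ← Matrix.mul_assoc, hIC]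
  have hUDpD : UDp * D = 1 := by
    show ((Dᵀ * U * D)⁻¹ * Dᵀ * Uᵀ) * D = 1
    rw [hUT, Matrix.mul_assoc, Matrix.mul_assoc, ← Matrix.mul_assoc Dᵀ U D,
      Matrix.nonsing_inv_mul _ hdet2]
  have hID : Ihat * D = D := by
    show (U * D * UDp + C * Cp) * D = D
    rw [Matrix.add_mul, Matrix.mul_assoc (U * D) UDp D, hUDpD, Matrix.mul_one]
    have : U * D + C * Cp * D = (U + C * Cp) * D := by rw [Matrix.add_mul]
    rw [Matrix.mul_assoc C Cp D, ← Matrix.mul_assoc C Cp D, this]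
    show ((1 - C * Cp) + C * Cp) * D = D
    rw [sub_add_cancel, Matrix.one_mul]
  have hIq : Ihat *ᵥ q = q := by
    rw [hq, Matrix.mulVec_mulVec, hID]
  refine ⟨hIq, hIA, ?_⟩
  have hApp : App = A := hIA
  have hAppp : Appp = Ap := by
    show (Appᵀ * App)⁻¹ * Appᵀ = Ap
    rw [hApp]
  rw [hApp, hAppp]
  congr 1
  rw [Matrix.sub_mulVec, Matrix.sub_mulVec, hIq, Matrix.one_mulVec]
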